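/- Let P be a self-adjoint contraction on a Hilbert space and ψ ∈ H. Then for every i ≥ 0, |⟨ψ, (I−P)P^i ψ⟩ − ⟨ψ, (I−P)P^{i+1} ψ⟩| ≤ ‖(I−P)ψ‖², and consequently ∑_{i=0}^{t−1} ⟨ψ, (I−P)P^i ψ⟩ ≥ t⟨ψ, (I−P)ψ⟩ − (t²/2)‖(I−P)ψ‖². -/

import Mathlib

open Finset
open scoped RealInnerProductSpace

theorem stmt4 {H : Type*} [NormedAddCommGroup H] [InnerProductSpace ℝ H] [CompleteSpace H]
    (P : H →L[ℝ] H) (hPsa : IsSelfAdjoint P) (hPnorm : ‖P‖ ≤ 1) (ψ : H) :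
    (∀ i : ℕ,
        |⟪ψ, (1 - P) ((P ^ i) ψ)⟫ - ⟪ψ, (1 - P) ((P ^ (i + 1)) ψ)⟫| ≤ ‖(1 - P) ψ‖ ^ 2) ∧
    ∀ t : ℕ, 1 ≤ t →
      (t : ℝ) * ⟪ψ, (1 - P) ψ⟫ - (t : ℝ) ^ 2 / 2 * ‖(1 - P) ψ‖ ^ 2
        ≤ ∑ i ∈ Finset.range t, ⟪ψ, (1 - P) ((P ^ i) ψ)⟫ := by
  have hQsa : IsSelfAdjoint ((1 : H →L[ℝ] H) - P) := by
    rw [IsSelfAdjoint, star_sub, star_one, hPsa.star_eq]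
  have hPpow : ∀ i : ℕ, ∀ x : H, ‖(P ^ i) x‖ ≤ ‖x‖ := by
    intro i
    induction i with
    | zero => intro x; simp
    | succ n ih =>
      intro x
      have h : (P ^ (n + 1)) x = P ((P ^ n) x) := by
        rw [pow_succ']; rfl
      rw [h]
      calc ‖P ((P ^ n) x)‖ ≤ ‖P‖ * ‖(P ^ n) x‖ := P.le_opNorm _
        _ ≤ 1 * ‖x‖ := mul_le_mul hPnorm (ih x) (norm_nonneg _) zero_le_one
        _ = ‖x‖ := one_mul _
  have key : ∀ i : ℕ,
      |⟪ψ, (1 - P) ((P ^ i) ψ)⟫ - ⟪ψ, (1 - P) ((P ^ (i + 1)) ψ)⟫| ≤ ‖(1 - P) ψ‖ ^ 2 := by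
    intro i
    have hx : (P ^ i) ψ - (P ^ (i + 1)) ψ = (P ^ i) ((1 - P) ψ) := by
      rw [pow_succ]
      simp [ContinuousLinearMap.sub_apply, map_sub]
    have h1 : ⟪ψ, (1 - P) ((P ^ i) ψ)⟫ - ⟪ψ, (1 - P) ((P ^ (i + 1)) ψ)⟫
        = ⟪(1 - P) ψ, (P ^ i) ((1 - P) ψ)⟫ := by
      rw [← inner_sub_right, ← map_sub, hx]
      exact (hQsa.isSymmetric ψ _).symm
    rw [h1]
    calc |⟪(1 - P) ψ, (P ^ i) ((1 - P) ψ)⟫|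
        ≤ ‖(1 - P) ψ‖ * ‖(P ^ i) ((1 - P) ψ)‖ := abs_real_inner_le_norm _ _
      _ ≤ ‖(1 - P) ψ‖ * ‖(1 - P) ψ‖ :=
          mul_le_mul_of_nonneg_left (hPpow i _) (norm_nonneg _)
      _ = ‖(1 - P) ψ‖ ^ 2 := (sq _).symm
  refine ⟨key, ?_⟩
  intro t ht
  have hlow : ∀ i : ℕ, ⟪ψ, (1 - P) ψ⟫ - (i : ℝ) * ‖(1 - P) ψ‖ ^ 2
      ≤ ⟪ψ, (1 - P) ((P ^ i) ψ)⟫ := by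
    intro i
    induction i with
    | zero => simp
    | succ n ih =>
      have h := key n
      have h2 : ⟪ψ, (1 - P) ((P ^ n) ψ)⟫ - ‖(1 - P) ψ‖ ^ 2
          ≤ ⟪ψ, (1 - P) ((P ^ (n + 1)) ψ)⟫ := by
        have := abs_le.mp h
        linarith [this.2]
      have hc : ((n + 1 : ℕ) : ℝ) = (n : ℝ) + 1 := by push_cast; ring
      rw [hc]
      linarith
  have hsum : ∑ i ∈ Finset.range t, (⟪ψ, (1 - P) ψ⟫ - (i : ℝ) * ‖(1 - P) ψ‖ ^ 2)
      ≤ ∑ i ∈ Finset.range t, ⟪ψ, (1 - P) ((P ^ i) ψ)⟫ :=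
    Finset.sum_le_sum fun i _ => hlow i
  have hsum2 : ∑ i ∈ Finset.range t, (⟪ψ, (1 - P) ψ⟫ - (i : ℝ) * ‖(1 - P) ψ‖ ^ 2)
      = (t : ℝ) * ⟪ψ, (1 - P) ψ⟫ - (∑ i ∈ Finset.range t, (i : ℝ)) * ‖(1 - P) ψ‖ ^ 2 := by
    rw [Finset.sum_sub_distrib, Finset.sum_const, Finset.card_range, ← Finset.sum_mul]
    simp [nsmul_eq_mul]
  have hs : ∀ m : ℕ, ∑ i ∈ Finset.range m, (i : ℝ) = (m : ℝ) * ((m : ℝ) - 1) / 2 := by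
    intro m
    induction m with
    | zero => simp
    | succ n ih => rw [Finset.sum_range_succ, ih]; push_cast; ring
  have hiSum : ∑ i ∈ Finset.range t, (i : ℝ) ≤ (t : ℝ) ^ 2 / 2 := by
    rw [hs t]
    nlinarith [sq_nonneg ((t : ℝ) - 1)]
  have hnn : (0 : ℝ) ≤ ‖(1 - P) ψ‖ ^ 2 := sq_nonneg _
  calc (t : ℝ) * ⟪ψ, (1 - P) ψ⟫ - (t : ℝ) ^ 2 / 2 * ‖(1 - P) ψ‖ ^ 2
      ≤ (t : ℝ) * ⟪ψ, (1 - P) ψ⟫ - (∑ i ∈ Finset.range t, (i : ℝ)) * ‖(1 - P) ψ‖ ^ 2 := by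
        nlinarith
    _ = ∑ i ∈ Finset.range t, (⟪ψ, (1 - P) ψ⟫ - (i : ℝ) * ‖(1 - P) ψ‖ ^ 2) := hsum2.symm
    _ ≤ _ := hsum
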